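/- arXiv:1301.6063 — 9 statements merged into one kernel-verified Lean document; each statement's English description precedes it below -/
import Mathlib

section
/- Let U, V, Γ be finite nonempty sets, q ∈ 𝔓(U×V), f : U → Γ, g : V → Γ, and let ε, σ be real numbers with 0 < σ < 1/2 and 0 < ε ≤ (1−2σ)/2. Suppose that q({(u,v) : f(u) = g(v)}) ≥ 1−ε and that for every k ∈ Γ both q_U({u : f(u) = k}) ≤ ε and q_V({v : g(v) = k}) ≤ ε. Then there exists a function Θ : Γ → {0,1} such that q({(u,v) : Θ(f(u)) ≠ Θ(g(v))}) ≤ ε, q_U({u : Θ(f(u)) = 1}) ∈ [σ, 1−σ], and q_V({v : Θ(g(v)) = 1}) ∈ [σ, 1−σ]. -/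
attribute [local instance] Classical.propDecidable

lemma exists_half_subset {Γ : Type} [Fintype Γ] (r : Γ → ℝ) (ε : ℝ)
    (hr0 : ∀ k, 0 ≤ r k) (hrε : ∀ k, r k ≤ ε) (hsum : ∑ k, r k = 1)
    (hε0 : 0 < ε) (hε1 : ε < 1) :
    ∃ s : Finset Γ, 1 / 2 - ε / 2 ≤ ∑ k ∈ s, r k ∧ ∑ k ∈ s, r k ≤ 1 / 2 + ε / 2 := by
  classical
  set T : Finset (Finset Γ) :=
    Finset.univ.filter (fun s : Finset Γ => ∑ k ∈ s, r k ≤ 1 / 2) with hT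
  have hTne : T.Nonempty := ⟨∅, by simp [hT]⟩
  obtain ⟨s, hsT, hmax⟩ := T.exists_max_image (fun s => ∑ k ∈ s, r k) hTne
  have hs : ∑ k ∈ s, r k ≤ 1 / 2 := by
    have := hsT; simp [hT] at this; linarith
  by_cases hlow : 1 / 2 - ε / 2 ≤ ∑ k ∈ s, r k
  · exact ⟨s, hlow, by linarith⟩
  push_neg at hlow
  have hk : ∃ k ∉ s, 0 < r k := by
    by_contra h
    push_neg at h
    have hcomp : ∑ k ∈ sᶜ, r k = 0 := by
      apply Finset.sum_eq_zero
      intro k hks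
      have hkns : k ∉ s := by simpa using hks
      exact le_antisymm (h k hkns) (hr0 k)
    have : ∑ k ∈ s, r k + ∑ k ∈ sᶜ, r k = 1 := by
      rw [Finset.sum_add_sum_compl]; exact hsum
    linarith
  obtain ⟨k, hks, hkpos⟩ := hk
  refine ⟨insert k s, ?_, ?_⟩ <;> rw [Finset.sum_insert hks]
  · have hnotT : ¬ (r k + ∑ k ∈ s, r k ≤ 1 / 2) := by
      intro hle
      have hmem : insert k s ∈ T := by
        simp only [hT, Finset.mem_filter, Finset.mem_univ, true_and,
          Finset.sum_insert hks]
        exact hle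
      have := hmax _ hmem
      rw [Finset.sum_insert hks] at this
      linarith
    push_neg at hnotT
    linarith
  · have := hrε k
    linarith

/-- If `q ∈ 𝔓(U×V)`, `f : U → Γ`, `g : V → Γ`, `0 < σ < 1/2`,
`0 < ε ≤ (1−2σ)/2`, the probability that `f` and `g` agree is at least `1−ε`, and
every single value `k ∈ Γ` has marginal probability at most `ε` under both `f` and `g`,
then there is a binarization `Θ : Γ → {0,1}` such that `Θ∘f` and `Θ∘g` disagree with
probability at most `ε` while both `q_U(Θ∘f = 1)` and `q_V(Θ∘g = 1)` lie in `[σ, 1−σ]`. -/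
theorem binarization_of_almost_common_functions
    {U V Γ : Type} [Fintype U] [Fintype V] [Fintype Γ]
    [Nonempty U] [Nonempty V] [Nonempty Γ]
    (q : U × V → ℝ) (hq0 : ∀ uv : U × V, 0 ≤ q uv) (hq1 : ∑ uv : U × V, q uv = 1)
    (f : U → Γ) (g : V → Γ) (ε σ : ℝ)
    (hσ0 : 0 < σ) (hσ : σ < 1 / 2) (hε0 : 0 < ε) (hε : ε ≤ (1 - 2 * σ) / 2)
    (hagree : 1 - ε ≤ ∑ uv : U × V, if f uv.1 = g uv.2 then q uv else 0)
    (hfk : ∀ k : Γ, (∑ u : U, if f u = k then ∑ v : V, q (u, v) else 0) ≤ ε)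
    (hgk : ∀ k : Γ, (∑ v : V, if g v = k then ∑ u : U, q (u, v) else 0) ≤ ε) :
    ∃ Θ : Γ → Fin 2,
      (∑ uv : U × V, if Θ (f uv.1) ≠ Θ (g uv.2) then q uv else 0) ≤ ε ∧
      (∑ u : U, if Θ (f u) = 1 then ∑ v : V, q (u, v) else 0) ∈ Set.Icc σ (1 - σ) ∧
      (∑ v : V, if Θ (g v) = 1 then ∑ u : U, q (u, v) else 0) ∈ Set.Icc σ (1 - σ) := by
  classical
  -- marginal masses of fibers
  set Pf : Γ → ℝ := fun k => ∑ u : U, if f u = k then ∑ v : V, q (u, v) else 0 with hPf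
  set Pg : Γ → ℝ := fun k => ∑ v : V, if g v = k then ∑ u : U, q (u, v) else 0 with hPg
  set r : Γ → ℝ := fun k => (Pf k + Pg k) / 2 with hr
  have hqrow : ∀ u : U, 0 ≤ ∑ v : V, q (u, v) := fun u =>
    Finset.sum_nonneg fun v _ => hq0 (u, v)
  have hqcol : ∀ v : V, 0 ≤ ∑ u : U, q (u, v) := fun v =>
    Finset.sum_nonneg fun u _ => hq0 (u, v)
  have hPf0 : ∀ k, 0 ≤ Pf k := by
    intro k; apply Finset.sum_nonneg; intro u _
    split <;> [exact hqrow u; exact le_refl 0]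
  have hPg0 : ∀ k, 0 ≤ Pg k := by
    intro k; apply Finset.sum_nonneg; intro v _
    split <;> [exact hqcol v; exact le_refl 0]
  have hPfsum : ∑ k : Γ, Pf k = 1 := by
    simp only [hPf]
    rw [Finset.sum_comm]
    simp only [Finset.sum_ite_eq, Finset.mem_univ, if_true]
    rw [← Fintype.sum_prod_type]
    exact hq1
  have hPgsum : ∑ k : Γ, Pg k = 1 := by
    simp only [hPg]
    rw [Finset.sum_comm]
    simp only [Finset.sum_ite_eq, Finset.mem_univ, if_true]
    rw [Finset.sum_comm, ← Fintype.sum_prod_type]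
    exact hq1
  have hε1 : ε < 1 := by linarith
  have hrsum : ∑ k : Γ, r k = 1 := by
    simp only [hr, ← Finset.sum_div, Finset.sum_add_distrib, hPfsum, hPgsum]
    norm_num
  have hr0 : ∀ k, 0 ≤ r k := fun k => by
    have := hPf0 k; have := hPg0 k; simp only [hr]; linarith
  have hrε : ∀ k, r k ≤ ε := fun k => by
    have := hfk k; have := hgk k; simp only [hr, hPf, hPg] at *; linarith
  obtain ⟨s, hs1, hs2⟩ := exists_half_subset r ε hr0 hrε hrsum hε0 hε1
  refine ⟨fun k => if k ∈ s then 1 else 0, ?_⟩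
  set Θ : Γ → Fin 2 := fun k => if k ∈ s then 1 else 0 with hΘ
  have hΘ1 : ∀ k, (Θ k = 1) ↔ k ∈ s := by
    intro k; by_cases h : k ∈ s <;> simp [hΘ, h]
  -- disagreement bound
  have hD : (∑ uv : U × V, if f uv.1 ≠ g uv.2 then q uv else 0) ≤ ε := by
    have hsplit : ∀ uv : U × V,
        (if f uv.1 = g uv.2 then q uv else 0) + (if f uv.1 ≠ g uv.2 then q uv else 0)
          = q uv := by
      intro uv; by_cases h : f uv.1 = g uv.2 <;> simp [h]
    have : (∑ uv : U × V, if f uv.1 = g uv.2 then q uv else 0)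
        + (∑ uv : U × V, if f uv.1 ≠ g uv.2 then q uv else 0) = 1 := by
      rw [← Finset.sum_add_distrib]
      rw [Finset.sum_congr rfl (fun uv _ => hsplit uv)]
      exact hq1
    linarith
  have hE : (∑ uv : U × V, if Θ (f uv.1) ≠ Θ (g uv.2) then q uv else 0) ≤ ε := by
    refine le_trans (Finset.sum_le_sum ?_) hD
    intro uv _
    by_cases h : f uv.1 = g uv.2
    · simp [h, hq0 uv]
    · simp only [h, ne_eq, not_false_iff, if_true]
      split <;> [exact le_refl _; exact hq0 uv]
  -- marginal sums as fiber sums over s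
  have hfiberU : ∀ w : U → ℝ, (∑ u : U, if f u ∈ s then w u else 0)
      = ∑ k ∈ s, ∑ u : U, if f u = k then w u else 0 := by
    intro w
    symm
    rw [Finset.sum_comm]
    exact Finset.sum_congr rfl fun u _ => by rw [Finset.sum_ite_eq]
  have hfiberV : ∀ w : V → ℝ, (∑ v : V, if g v ∈ s then w v else 0)
      = ∑ k ∈ s, ∑ v : V, if g v = k then w v else 0 := by
    intro w
    symm
    rw [Finset.sum_comm]
    exact Finset.sum_congr rfl fun v _ => by rw [Finset.sum_ite_eq]
  have hmU : (∑ u : U, if Θ (f u) = 1 then ∑ v : V, q (u, v) else 0)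
      = ∑ k ∈ s, Pf k := by
    have h1 : (∑ u : U, if Θ (f u) = 1 then ∑ v : V, q (u, v) else 0)
        = ∑ u : U, if f u ∈ s then ∑ v : V, q (u, v) else 0 :=
      Finset.sum_congr rfl fun u _ => by by_cases h : f u ∈ s <;> simp [hΘ, h]
    rw [h1, hfiberU]
  have hmV : (∑ v : V, if Θ (g v) = 1 then ∑ u : U, q (u, v) else 0)
      = ∑ k ∈ s, Pg k := by
    have h1 : (∑ v : V, if Θ (g v) = 1 then ∑ u : U, q (u, v) else 0)
        = ∑ v : V, if g v ∈ s then ∑ u : U, q (u, v) else 0 :=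
      Finset.sum_congr rfl fun v _ => by by_cases h : g v ∈ s <;> simp [hΘ, h]
    rw [h1, hfiberV]
  -- joint representations
  have hjU : ∑ k ∈ s, Pf k = ∑ uv : U × V, if f uv.1 ∈ s then q uv else 0 := by
    rw [← hfiberU, Fintype.sum_prod_type]
    exact Finset.sum_congr rfl fun u _ => by
      by_cases h : f u ∈ s <;> simp [h]
  have hjV : ∑ k ∈ s, Pg k = ∑ uv : U × V, if g uv.2 ∈ s then q uv else 0 := by
    rw [← hfiberV, Fintype.sum_prod_type, Finset.sum_comm]
    exact Finset.sum_congr rfl fun v _ => by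
      by_cases h : g v ∈ s <;> simp [h]
  -- difference of marginals bounded by disagreement
  have habs : |∑ k ∈ s, Pf k - ∑ k ∈ s, Pg k|
      ≤ ∑ uv : U × V, if Θ (f uv.1) ≠ Θ (g uv.2) then q uv else 0 := by
    rw [hjU, hjV, ← Finset.sum_sub_distrib]
    refine le_trans (Finset.abs_sum_le_sum_abs _ _) (Finset.sum_le_sum ?_)
    intro uv _
    by_cases h1 : f uv.1 ∈ s <;> by_cases h2 : g uv.2 ∈ s <;>
      simp [h1, h2, hΘ, abs_of_nonneg (hq0 uv), hq0 uv]
  -- sum of marginals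
  have hsumUV : ∑ k ∈ s, Pf k + ∑ k ∈ s, Pg k = 2 * ∑ k ∈ s, r k := by
    simp only [hr]
    rw [← Finset.sum_add_distrib, Finset.mul_sum]
    exact Finset.sum_congr rfl fun k _ => by ring
  have habs' := abs_le.mp (le_trans habs hE)
  refine ⟨hE, ?_, ?_⟩
  · rw [Set.mem_Icc, hmU]
    constructor <;> linarith [hs1, hs2, hsumUV, habs'.1, habs'.2]
  · rw [Set.mem_Icc, hmV]
    constructor <;> linarith [hs1, hs2, hsumUV, habs'.1, habs'.2]
end

section
/- Let n ≥ 1 and let a, b, c : {1,…,n} → ℝ be nonnegative functions satisfying Σ_{k=1}^n a(k) = Σ_{k=1}^n b(k) = 1, c(k) ≤ min{a(k), b(k)} for all k, Σ_{k=1}^n c(k) ≥ 1−ε, and a(k) ≤ ε, b(k) ≤ ε for all k, where ε ≥ 0. Let 0 < σ < 1/2. Then there exists m ∈ {1,…,n} such that, with A_m := Σ_{k=1}^m a(k) and B_m := Σ_{k=1}^m b(k), one has σ ≤ min{A_m, B_m} and max{A_m, B_m} ≤ σ + 2ε. -/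
/-- Let `a, b, c : {1,…,n} → ℝ` be nonnegative with
`Σ a = Σ b = 1`, `c k ≤ min (a k) (b k)` for all `k`, `Σ c ≥ 1 − ε`, and
`a k ≤ ε`, `b k ≤ ε` for all `k`, where `ε ≥ 0`. Then for every `0 < σ < 1/2`
there is an index `m` whose partial sums `A_m`, `B_m` satisfy
`σ ≤ min A_m B_m` and `max A_m B_m ≤ σ + 2ε`. -/
theorem partial_sums_balanced_cut
    (n : ℕ) (hn : 1 ≤ n) (a b c : ℕ → ℝ) (ε σ : ℝ) (hε : 0 ≤ ε)
    (ha0 : ∀ k ∈ Finset.Icc 1 n, 0 ≤ a k)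
    (hb0 : ∀ k ∈ Finset.Icc 1 n, 0 ≤ b k)
    (hc0 : ∀ k ∈ Finset.Icc 1 n, 0 ≤ c k)
    (ha1 : ∑ k ∈ Finset.Icc 1 n, a k = 1)
    (hb1 : ∑ k ∈ Finset.Icc 1 n, b k = 1)
    (hcab : ∀ k ∈ Finset.Icc 1 n, c k ≤ min (a k) (b k))
    (hcsum : 1 - ε ≤ ∑ k ∈ Finset.Icc 1 n, c k)
    (haε : ∀ k ∈ Finset.Icc 1 n, a k ≤ ε)
    (hbε : ∀ k ∈ Finset.Icc 1 n, b k ≤ ε)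
    (hσ0 : 0 < σ) (hσ : σ < 1 / 2) :
    ∃ m ∈ Finset.Icc 1 n,
      σ ≤ min (∑ k ∈ Finset.Icc 1 m, a k) (∑ k ∈ Finset.Icc 1 m, b k) ∧
      max (∑ k ∈ Finset.Icc 1 m, a k) (∑ k ∈ Finset.Icc 1 m, b k) ≤ σ + 2 * ε := by
  classical
  set A : ℕ → ℝ := fun m => ∑ k ∈ Finset.Icc 1 m, a k with hAdef
  set B : ℕ → ℝ := fun m => ∑ k ∈ Finset.Icc 1 m, b k with hBdef
  -- key: for m ≤ n, |A m - B m| ≤ ε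
  have key : ∀ m, m ≤ n → B m - A m ≤ ε ∧ A m - B m ≤ ε := by
    intro m hm
    have hsub : Finset.Icc 1 m ⊆ Finset.Icc 1 n := Finset.Icc_subset_Icc_right hm
    constructor
    · have h1 : B m - A m = ∑ k ∈ Finset.Icc 1 m, (b k - a k) := by
        simp [hAdef, hBdef, Finset.sum_sub_distrib]
      have h2 : ∑ k ∈ Finset.Icc 1 m, (b k - a k) ≤ ∑ k ∈ Finset.Icc 1 m, (b k - c k) := by
        apply Finset.sum_le_sum
        intro k hk
        have := hcab k (hsub hk)
        have := min_le_left (a k) (b k)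
        linarith
      have h3 : ∑ k ∈ Finset.Icc 1 m, (b k - c k) ≤ ∑ k ∈ Finset.Icc 1 n, (b k - c k) := by
        apply Finset.sum_le_sum_of_subset_of_nonneg hsub
        intro k hk _
        have := hcab k hk
        have := min_le_right (a k) (b k)
        linarith
      have h4 : ∑ k ∈ Finset.Icc 1 n, (b k - c k) ≤ ε := by
        rw [Finset.sum_sub_distrib, hb1]; linarith
      linarith
    · have h1 : A m - B m = ∑ k ∈ Finset.Icc 1 m, (a k - b k) := by
        simp [hAdef, hBdef, Finset.sum_sub_distrib]
      have h2 : ∑ k ∈ Finset.Icc 1 m, (a k - b k) ≤ ∑ k ∈ Finset.Icc 1 m, (a k - c k) := by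
        apply Finset.sum_le_sum
        intro k hk
        have := hcab k (hsub hk)
        have := min_le_right (a k) (b k)
        linarith
      have h3 : ∑ k ∈ Finset.Icc 1 m, (a k - c k) ≤ ∑ k ∈ Finset.Icc 1 n, (a k - c k) := by
        apply Finset.sum_le_sum_of_subset_of_nonneg hsub
        intro k hk _
        have := hcab k hk
        have := min_le_left (a k) (b k)
        linarith
      have h4 : ∑ k ∈ Finset.Icc 1 n, (a k - c k) ≤ ε := by
        rw [Finset.sum_sub_distrib, ha1]; linarith
      linarith
  have hP : ∃ m, (1 ≤ m ∧ m ≤ n) ∧ σ ≤ A m ∧ σ ≤ B m := by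
    refine ⟨n, ⟨hn, le_refl n⟩, ?_, ?_⟩
    · have : A n = 1 := ha1
      rw [this]; linarith
    · have : B n = 1 := hb1
      rw [this]; linarith
  let m := Nat.find hP
  obtain ⟨⟨hm1, hm2⟩, hAσ, hBσ⟩ := Nat.find_spec hP
  have hmem : m ∈ Finset.Icc 1 n := Finset.mem_Icc.mpr ⟨hm1, hm2⟩
  -- predecessor fact
  have hpred : A (m - 1) < σ ∨ B (m - 1) < σ := by
    by_cases h1 : m = 1
    · left
      have : A 0 = 0 := by simp [hAdef]
      rw [h1]; simpa [this] using hσ0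
    · have hlt : m - 1 < m := Nat.sub_lt (lt_of_lt_of_le Nat.zero_lt_one hm1) Nat.one_pos
      have := Nat.find_min hP hlt
      push_neg at this
      have h11 : 1 ≤ m - 1 := by omega
      have h12 : m - 1 ≤ n := by omega
      by_cases hA' : σ ≤ A (m - 1)
      · right; exact this ⟨h11, h12⟩ hA'
      · left; exact lt_of_not_ge hA'
  have hsplitA : A m = A (m - 1) + a m := by
    have : m = (m - 1) + 1 := by omega
    rw [this, hAdef]
    exact Finset.sum_Icc_succ_top (by omega) a
  have hsplitB : B m = B (m - 1) + b m := by
    have : m = (m - 1) + 1 := by omega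
    rw [this, hBdef]
    exact Finset.sum_Icc_succ_top (by omega) b
  have haεm := haε m hmem
  have hbεm := hbε m hmem
  obtain ⟨hk1, hk2⟩ := key m hm2
  refine ⟨m, hmem, le_min hAσ hBσ, max_le ?_ ?_⟩
  · rcases hpred with h | h
    · linarith
    · linarith
  · rcases hpred with h | h
    · linarith
    · linarith
end

section
/- Let S be a finite set and for each s ∈ S let N_s be a quantum channel from d×d to d'×d' complex matrices. Let 𝔖 = {ρ_1,…,ρ_K} be density matrices on ℂ^d and suppose there exist p_1,…,p_K ∈ 𝔓(S) such that Σ_{s∈S} p_i(s) N_s(ρ_j) = Σ_{s∈S} p_j(s) N_s(ρ_i) for all i,j ∈ {1,…,K}. Then for every N ≥ K and every choice of density matrices ρ_{K+1},…,ρ_N in the convex hull of 𝔖, there exist p_{K+1},…,p_N ∈ 𝔓(S) such that Σ_{s∈S} p_i(s) N_s(ρ_j) = Σ_{s∈S} p_j(s) N_s(ρ_i) for all i,j ∈ {1,…,N}. -/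
open scoped ComplexOrder
/-- A probability distribution on the finite set `S`. -/
def IsProbDist {S : Type*} [Fintype S] (p : S → ℝ) : Prop :=
  (∀ s, 0 ≤ p s) ∧ ∑ s, p s = 1

/-- A density matrix (quantum state) on `ℂ^d`: positive semidefinite with trace one. -/
def IsDensityMatrix {d : ℕ} (ρ : Matrix (Fin d) (Fin d) ℂ) : Prop :=
  ρ.PosSemidef ∧ ρ.trace = 1

/-- The application of `id_{k×k} ⊗ N` to a matrix on `ℂ^k ⊗ ℂ^d`, written in block form. -/
def blockApply {d d' : ℕ} (N : Matrix (Fin d) (Fin d) ℂ →ₗ[ℂ] Matrix (Fin d') (Fin d') ℂ)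
    (k : ℕ) (M : Matrix (Fin k × Fin d) (Fin k × Fin d) ℂ) :
    Matrix (Fin k × Fin d') (Fin k × Fin d') ℂ :=
  Matrix.of fun pq rs => N (Matrix.of fun a b => M (pq.1, a) (rs.1, b)) pq.2 rs.2

/-- Complete positivity: all the block extensions `id_k ⊗ N` map positive semidefinite
matrices to positive semidefinite matrices. -/
def IsCompletelyPositive {d d' : ℕ}
    (N : Matrix (Fin d) (Fin d) ℂ →ₗ[ℂ] Matrix (Fin d') (Fin d') ℂ) : Prop :=
  ∀ (k : ℕ) (M : Matrix (Fin k × Fin d) (Fin k × Fin d) ℂ),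
    M.PosSemidef → (blockApply N k M).PosSemidef

/-- A quantum channel: a linear, completely positive, trace-preserving map. -/
def IsQuantumChannel {d d' : ℕ}
    (N : Matrix (Fin d) (Fin d) ℂ →ₗ[ℂ] Matrix (Fin d') (Fin d') ℂ) : Prop :=
  IsCompletelyPositive N ∧ ∀ M, (N M).trace = M.trace

/-- Let `{N_s}_{s∈S}` be a finite family of quantum channels. If the
density matrices `ρ 0, …, ρ (K-1)` admit distributions `p 0, …, p (K-1) ∈ 𝔓(S)` with
`Σ_s p_i(s) N_s(ρ_j) = Σ_s p_j(s) N_s(ρ_i)` for all `i, j < K`, then for every `N ≥ K`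
and density matrices `ρ K, …, ρ (N-1)` in the convex hull of `{ρ 0, …, ρ (K-1)}` there
exist distributions for the new states, extending the given ones, such that the
symmetrization identities hold for all `i, j < N`. -/
theorem convex_extension_of_symmetrizing_distributions_states
    {S : Type} [Fintype S] (d d' : ℕ)
    (N : S → (Matrix (Fin d) (Fin d) ℂ →ₗ[ℂ] Matrix (Fin d') (Fin d') ℂ))
    (hchan : ∀ s, IsQuantumChannel (N s))
    (K NN : ℕ) (hKN : K ≤ NN)
    (ρ : ℕ → Matrix (Fin d) (Fin d) ℂ) (p : ℕ → S → ℝ)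
    (hρ : ∀ i < NN, IsDensityMatrix (ρ i))
    (hp : ∀ i < K, IsProbDist (p i))
    (hsym : ∀ i < K, ∀ j < K,
      ∑ s : S, p i s • N s (ρ j) = ∑ s : S, p j s • N s (ρ i))
    (hconv : ∀ i, K ≤ i → i < NN →
      ρ i ∈ convexHull ℝ (ρ '' (Set.Iio K))) :
    ∃ q : ℕ → S → ℝ,
      (∀ i < NN, IsProbDist (q i)) ∧
      (∀ i < K, q i = p i) ∧
      (∀ i < NN, ∀ j < NN,
        ∑ s : S, q i s • N s (ρ j) = ∑ s : S, q j s • N s (ρ i)) := by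
  classical
  -- Step 1: representation of the extra states as convex combinations
  have hrep : ∀ i, ∃ w : Fin K → ℝ, K ≤ i → i < NN →
      (∀ k, 0 ≤ w k) ∧ (∑ k, w k) = 1 ∧ ρ i = ∑ k : Fin K, w k • ρ (k : ℕ) := by
    intro i
    by_cases h : K ≤ i ∧ i < NN
    · obtain ⟨h1, h2⟩ := h
      have hm := hconv i h1 h2
      have hrange : ρ '' (Set.Iio K) = Set.range (fun k : Fin K => ρ (k : ℕ)) := by
        ext x
        constructor
        · rintro ⟨j, hj, rfl⟩; exact ⟨⟨j, hj⟩, rfl⟩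
        · rintro ⟨k, rfl⟩; exact ⟨(k : ℕ), k.2, rfl⟩
      rw [hrange, convexHull_range_eq_exists_affineCombination] at hm
      obtain ⟨t, w, hw0, hw1, hwx⟩ := hm
      rw [Finset.affineCombination_eq_linear_combination _ _ _ hw1] at hwx
      refine ⟨fun k => if k ∈ t then w k else 0, fun _ _ => ⟨?_, ?_, ?_⟩⟩
      · intro k; dsimp only; split
        · exact hw0 k ‹_›
        · exact le_refl 0
      · rw [Finset.sum_ite_mem, Finset.univ_inter, hw1]
      · rw [← hwx]; simp [ite_smul]
    · exact ⟨fun _ => 0, fun h1 h2 => absurd ⟨h1, h2⟩ h⟩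
  choose w hw using hrep
  -- Step 2: define the extended distributions
  set q : ℕ → S → ℝ := fun i s => if i < K then p i s else ∑ k : Fin K, w i k * p (k : ℕ) s
    with hqdef
  have hqlt : ∀ i < K, q i = p i := by
    intro i hi; funext s; simp [hqdef, hi]
  have hNsmul : ∀ (s : S) (r : ℝ) (M : Matrix (Fin d) (Fin d) ℂ),
      N s (r • M) = r • N s M := by
    intro s r M
    rw [← Complex.coe_smul, map_smul, Complex.coe_smul]
  -- the key quantity
  set F : ℕ → Matrix (Fin d) (Fin d) ℂ → Matrix (Fin d') (Fin d') ℂ :=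
    fun i M => ∑ s : S, q i s • N s M with hFdef
  have hFadd : ∀ i, ∀ w' : Fin K → ℝ, ∀ σ : Fin K → Matrix (Fin d) (Fin d) ℂ,
      F i (∑ k, w' k • σ k) = ∑ k, w' k • F i (σ k) := by
    intro i w' σ
    simp only [hFdef, map_sum, hNsmul, Finset.smul_sum]
    rw [Finset.sum_comm]
    exact Finset.sum_congr rfl fun k _ => Finset.sum_congr rfl fun s _ => smul_comm _ _ _
  -- key: for i ≥ K (i < NN), F i M = ∑ k, w i k • (∑ s, p k s • N s M)
  have hFge : ∀ i, K ≤ i → ∀ M, F i M = ∑ k : Fin K, w i k • ∑ s : S, p (k : ℕ) s • N s M := by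
    intro i hi M
    simp only [hFdef, hqdef, if_neg (not_lt.2 hi), Finset.sum_smul]
    rw [Finset.sum_comm]
    refine Finset.sum_congr rfl fun k _ => ?_
    rw [Finset.smul_sum]
    exact Finset.sum_congr rfl fun s _ => (smul_smul _ _ _).symm
  -- symmetry against old indices
  have hkey : ∀ i < NN, ∀ j < K, F i (ρ j) = ∑ s : S, p j s • N s (ρ i) := by
    intro i hi j hj
    rcases lt_or_ge i K with hiK | hiK
    · rw [hFdef]; simp only [hqlt i hiK]; exact hsym i hiK j hj
    · obtain ⟨hw0, hw1, hwrep⟩ := hw i hiK hi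
      rw [hFge i hiK]
      have : ∀ k : Fin K, (∑ s : S, p (k : ℕ) s • N s (ρ j)) = ∑ s : S, p j s • N s (ρ (k : ℕ)) :=
        fun k => hsym (k : ℕ) k.2 j hj
      simp_rw [this]
      rw [hwrep]
      simp only [map_sum, hNsmul, Finset.smul_sum]
      rw [Finset.sum_comm]
      exact Finset.sum_congr rfl fun s _ => Finset.sum_congr rfl fun k _ => smul_comm _ _ _
  refine ⟨q, ?_, hqlt, ?_⟩
  · intro i hi
    rcases lt_or_ge i K with hiK | hiK
    · rw [hqlt i hiK]; exact hp i hiK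
    · obtain ⟨hw0, hw1, _⟩ := hw i hiK hi
      constructor
      · intro s
        simp only [hqdef, if_neg (not_lt.2 hiK)]
        exact Finset.sum_nonneg fun k _ => mul_nonneg (hw0 k) ((hp (k : ℕ) k.2).1 s)
      · simp only [hqdef, if_neg (not_lt.2 hiK)]
        rw [Finset.sum_comm]
        calc (∑ k : Fin K, ∑ s : S, w i k * p (k : ℕ) s)
            = ∑ k : Fin K, w i k := Finset.sum_congr rfl fun k _ => by
              rw [← Finset.mul_sum, (hp (k : ℕ) k.2).2, mul_one]
          _ = 1 := hw1
  · intro i hi j hj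
    show F i (ρ j) = F j (ρ i)
    rcases lt_or_ge j K with hjK | hjK
    · rw [hkey i hi j hjK, hFdef]; simp only [hqlt j hjK]
    · obtain ⟨hw0, hw1, hwrep⟩ := hw j hjK hj
      rw [show (ρ j) = ∑ k : Fin K, w j k • ρ (k:ℕ) from hwrep, hFadd,
        hFge j hjK]
      exact Finset.sum_congr rfl fun k _ => by rw [hkey i hi (k : ℕ) k.2]
end

section
/- Let S be a finite set and for each s ∈ S let N_s be a quantum channel from d×d to d'×d' complex matrices. Let 𝔖 = {ρ_1,…,ρ_K} be density matrices on ℂ^d for which there exists NO collection p_1,…,p_K ∈ 𝔓(S) satisfying Σ_{s∈S} p_i(s) N_s(ρ_j) = Σ_{s∈S} p_j(s) N_s(ρ_i) for all i,j ∈ {1,…,K}. Then for every finite set 𝔖' = {σ_1,…,σ_{K'}} of density matrices on ℂ^d whose convex hull contains the convex hull of 𝔖, there exists no collection p_1,…,p_{K'} ∈ 𝔓(S) satisfying Σ_{s∈S} p_i(s) N_s(σ_j) = Σ_{s∈S} p_j(s) N_s(σ_i) for all i,j ∈ {1,…,K'}. -/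
open scoped ComplexOrder


lemma exists_weights {E : Type*} [AddCommGroup E] [Module ℝ E]
    (f : ℕ → E) (K : ℕ) (x : E) (hx : x ∈ convexHull ℝ (f '' Set.Iio K)) :
    ∃ c : ℕ → ℝ, (∀ j, 0 ≤ c j) ∧ (∑ j ∈ Finset.range K, c j = 1) ∧
      x = ∑ j ∈ Finset.range K, c j • f j := by
  rw [convexHull_eq] at hx
  obtain ⟨ι, t, w, z, hw, hw1, hz, hx⟩ := hx
  choose g hgK hgf using fun i (hi : i ∈ t) => (hz i hi : z i ∈ f '' Set.Iio K)
  classical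
  set G : ι → ℕ := fun i => if hi : i ∈ t then g i hi else 0 with hG
  refine ⟨fun j => ∑ i ∈ t.filter (fun i => G i = j), w i, ?_, ?_, ?_⟩
  · intro j
    exact Finset.sum_nonneg fun i hi => hw i (Finset.mem_filter.mp hi).1
  · rw [Finset.sum_fiberwise_of_maps_to (fun i hi => ?_) w]
    · exact hw1
    · simp only [Finset.mem_range, hG, dif_pos hi]
      exact hgK i hi
  · rw [← hx, Finset.centerMass_eq_of_sum_1 _ _ hw1]
    rw [← Finset.sum_fiberwise_of_maps_to (g := G) (t := Finset.range K)
      (fun i hi => by simp only [Finset.mem_range, hG, dif_pos hi]; exact hgK i hi)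
      (fun i => w i • z i)]
    refine Finset.sum_congr rfl fun j hj => ?_
    rw [Finset.sum_smul]
    refine Finset.sum_congr rfl fun i hi => ?_
    obtain ⟨hit, hGi⟩ := Finset.mem_filter.mp hi
    rw [← hGi]
    simp only [hG, dif_pos hit]
    rw [hgf i hit]


/-- Let `{N_s}_{s∈S}` be a finite family of quantum channels and let
`ρ 0, …, ρ (K-1)` be density matrices admitting NO collection of probability
distributions symmetrizing them. Then for every finite set `σ 0, …, σ (K'-1)` of
density matrices whose convex hull contains the convex hull of the `ρ i`, there is
no collection of probability distributions symmetrizing the `σ j` either. -/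
theorem no_symmetrizing_distributions_of_larger_convex_hull
    {S : Type} [Fintype S] (d d' : ℕ)
    (N : S → (Matrix (Fin d) (Fin d) ℂ →ₗ[ℂ] Matrix (Fin d') (Fin d') ℂ))
    (hchan : ∀ s, IsQuantumChannel (N s))
    (K K' : ℕ)
    (ρ : ℕ → Matrix (Fin d) (Fin d) ℂ) (sig : ℕ → Matrix (Fin d) (Fin d) ℂ)
    (hρ : ∀ i < K, IsDensityMatrix (ρ i))
    (hsig : ∀ i < K', IsDensityMatrix (sig i))
    (hnosym : ¬ ∃ p : ℕ → S → ℝ,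
      (∀ i < K, IsProbDist (p i)) ∧
      (∀ i < K, ∀ j < K,
        ∑ s : S, p i s • N s (ρ j) = ∑ s : S, p j s • N s (ρ i)))
    (hconv : convexHull ℝ (ρ '' (Set.Iio K)) ⊆ convexHull ℝ (sig '' (Set.Iio K'))) :
    ¬ ∃ p : ℕ → S → ℝ,
      (∀ i < K', IsProbDist (p i)) ∧
      (∀ i < K', ∀ j < K',
        ∑ s : S, p i s • N s (sig j) = ∑ s : S, p j s • N s (sig i)) := by
  simp only [IsProbDist] at *
  rintro ⟨p, hp, hsym⟩
  apply hnosym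
  have hmem : ∀ i, i < K → ρ i ∈ convexHull ℝ (sig '' Set.Iio K') := fun i hi =>
    hconv (subset_convexHull ℝ _ ⟨i, hi, rfl⟩)
  choose c hc0 hc1 hceq using fun i hi => exists_weights sig K' (ρ i) (hmem i hi)
  classical
  set C : ℕ → ℕ → ℝ := fun i => if hi : i < K then c i hi else fun _ => 0 with hCdef
  have hCeq : ∀ i (hi : i < K), ρ i = ∑ j ∈ Finset.range K', C i j • sig j := by
    intro i hi
    simp only [hCdef, dif_pos hi]
    exact hceq i hi
  have key : ∀ a, a < K → ∀ b, b < K →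
      ∑ s : S, (∑ j ∈ Finset.range K', C a j * p j s) • N s (ρ b)
        = ∑ j ∈ Finset.range K', ∑ j' ∈ Finset.range K',
            (C a j * C b j') • ∑ s : S, p j s • N s (sig j') := by
    intro a ha b hb
    have step : ∀ s : S, (∑ j ∈ Finset.range K', C a j * p j s) • N s (ρ b)
        = ∑ j ∈ Finset.range K', ∑ j' ∈ Finset.range K',
            (C a j * C b j') • (p j s • N s (sig j')) := by
      intro s
      rw [hCeq b hb, map_sum, Finset.sum_smul]
      refine Finset.sum_congr rfl fun j _ => ?_
      rw [Finset.smul_sum]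
      refine Finset.sum_congr rfl fun j' _ => ?_
      rw [LinearMap.map_smul_of_tower, smul_smul, smul_smul]
      congr 1
      ring
    calc ∑ s : S, (∑ j ∈ Finset.range K', C a j * p j s) • N s (ρ b)
        = ∑ s : S, ∑ j ∈ Finset.range K', ∑ j' ∈ Finset.range K',
            (C a j * C b j') • (p j s • N s (sig j')) := Finset.sum_congr rfl fun s _ => step s
      _ = ∑ j ∈ Finset.range K', ∑ s : S, ∑ j' ∈ Finset.range K',
            (C a j * C b j') • (p j s • N s (sig j')) := Finset.sum_comm
      _ = ∑ j ∈ Finset.range K', ∑ j' ∈ Finset.range K', ∑ s : S,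
            (C a j * C b j') • (p j s • N s (sig j')) :=
            Finset.sum_congr rfl fun j _ => Finset.sum_comm
      _ = ∑ j ∈ Finset.range K', ∑ j' ∈ Finset.range K',
            (C a j * C b j') • ∑ s : S, p j s • N s (sig j') := by
            refine Finset.sum_congr rfl fun j _ => Finset.sum_congr rfl fun j' _ => ?_
            rw [Finset.smul_sum]
  refine ⟨fun i s => ∑ j ∈ Finset.range K', C i j * p j s, ?_, ?_⟩
  · intro i hi
    constructor
    · intro s
      refine Finset.sum_nonneg fun j hj => mul_nonneg ?_ ((hp j (Finset.mem_range.mp hj)).1 s)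
      simp only [hCdef, dif_pos hi]
      exact hc0 i hi j
    · rw [Finset.sum_comm]
      have : ∀ j ∈ Finset.range K', ∑ s : S, C i j * p j s = C i j := by
        intro j hj
        rw [← Finset.mul_sum, (hp j (Finset.mem_range.mp hj)).2, mul_one]
      rw [Finset.sum_congr rfl this]
      simp only [hCdef, dif_pos hi]
      exact hc1 i hi
  · intro a ha b hb
    rw [key a ha b hb, key b hb a ha, Finset.sum_comm]
    refine Finset.sum_congr rfl fun x hx => Finset.sum_congr rfl fun y hy => ?_
    rw [mul_comm (C a y) (C b x), hsym y (Finset.mem_range.mp hy) x (Finset.mem_range.mp hx)]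
end

section
/- Let S be a finite set and for each s ∈ S let N_s be a quantum channel from d×d to d'×d' complex matrices. Then the family {N_s}_{s∈S} is symmetrizable if and only if for every K ∈ ℕ and every collection of pure states ψ_1,…,ψ_K on ℂ^d there exist p_1,…,p_K ∈ 𝔓(S) such that Σ_{s∈S} p_i(s) N_s(ψ_j) = Σ_{s∈S} p_j(s) N_s(ψ_i) for all i,j ∈ {1,…,K}. -/
open scoped ComplexOrder
/-- A pure state on `ℂ^d`: a rank-one projection `v v*` onto a unit vector `v`. -/
def IsPureState {d : ℕ} (ψ : Matrix (Fin d) (Fin d) ℂ) : Prop :=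
  ∃ v : Fin d → ℂ, ∑ a, Complex.normSq (v a) = 1 ∧
    ψ = Matrix.of fun a b => v a * (starRingEnd ℂ) (v b)

/-- A finite family `{N_s}_{s∈S}` of quantum channels is symmetrizable if for every `K`
and all density matrices `ρ 1, …, ρ K` there are distributions `p 1, …, p K ∈ 𝔓(S)` with
`Σ_s p_i(s) N_s(ρ_j) = Σ_s p_j(s) N_s(ρ_i)` for all `i, j`. -/
def Symmetrizable {S : Type} [Fintype S] {d d' : ℕ}
    (N : S → (Matrix (Fin d) (Fin d) ℂ →ₗ[ℂ] Matrix (Fin d') (Fin d') ℂ)) : Prop :=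
  ∀ (K : ℕ) (ρ : Fin K → Matrix (Fin d) (Fin d) ℂ),
    (∀ i, IsDensityMatrix (ρ i)) →
    ∃ p : Fin K → S → ℝ,
      (∀ i, IsProbDist (p i)) ∧
      (∀ i j, ∑ s : S, p i s • N s (ρ j) = ∑ s : S, p j s • N s (ρ i))


open Matrix in
lemma outer_posSemidef {d : ℕ} (v : Fin d → ℂ) :
    (Matrix.of fun a b => v a * (starRingEnd ℂ) (v b)).PosSemidef := by
  rw [Matrix.posSemidef_iff_dotProduct_mulVec]
  constructor
  · ext a b
    simp [Matrix.conjTranspose_apply, mul_comm]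
  · intro x
    have h : (star x) ⬝ᵥ ((Matrix.of fun a b => v a * (starRingEnd ℂ) (v b)) *ᵥ x)
        = star (∑ b, (starRingEnd ℂ) (v b) * x b) * (∑ b, (starRingEnd ℂ) (v b) * x b) := by
      simp only [dotProduct, Matrix.mulVec, Matrix.of_apply, Finset.mul_sum,
        Finset.sum_mul, map_sum, _root_.map_mul, Complex.conj_conj, Pi.star_apply,
        RCLike.star_def]
      rw [Finset.sum_comm]
      refine Finset.sum_congr rfl fun a _ => Finset.sum_congr rfl fun b _ => by ring
    rw [h]
    exact star_mul_self_nonneg _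

lemma outer_trace {d : ℕ} (v : Fin d → ℂ) (hv : ∑ a, Complex.normSq (v a) = 1) :
    (Matrix.of fun a b => v a * (starRingEnd ℂ) (v b)).trace = 1 := by
  have h : ∀ a, v a * (starRingEnd ℂ) (v a) = (Complex.normSq (v a) : ℂ) := by
    intro a; rw [Complex.mul_conj]
  simp only [Matrix.trace, Matrix.diag_apply, Matrix.of_apply, h]
  rw [← Complex.ofReal_sum, hv, Complex.ofReal_one]

lemma pure_isDensity {d : ℕ} {ψ : Matrix (Fin d) (Fin d) ℂ} (h : IsPureState ψ) :
    IsDensityMatrix ψ := by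
  obtain ⟨v, h1, rfl⟩ := h
  exact ⟨outer_posSemidef v, outer_trace v h1⟩

lemma density_decomp {d : ℕ} {ρ : Matrix (Fin d) (Fin d) ℂ} (h : ρ.PosSemidef)
    (ht : ρ.trace = 1) :
    ∃ (lam : Fin d → ℝ) (v : Fin d → Fin d → ℂ),
      (∀ k, 0 ≤ lam k) ∧ ∑ k, lam k = 1 ∧
      (∀ k, ∑ a, Complex.normSq (v k a) = 1) ∧
      ρ = ∑ k, lam k • Matrix.of (fun a b => v k a * (starRingEnd ℂ) (v k b)) := by
  have hH : ρ.IsHermitian := h.1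
  have hU : star (hH.eigenvectorUnitary : Matrix (Fin d) (Fin d) ℂ)
      * (hH.eigenvectorUnitary : Matrix (Fin d) (Fin d) ℂ) = 1 :=
    Matrix.mem_unitaryGroup_iff'.mp hH.eigenvectorUnitary.2
  refine ⟨hH.eigenvalues, fun k a => (hH.eigenvectorUnitary : Matrix (Fin d) (Fin d) ℂ) a k,
    h.eigenvalues_nonneg, ?_, ?_, ?_⟩
  · have htr : ρ.trace = ∑ k, (hH.eigenvalues k : ℂ) := by
      conv_lhs => rw [hH.spectral_theorem, Unitary.conjStarAlgAut_apply]
      rw [Matrix.trace_mul_cycle, hU, Matrix.one_mul, Matrix.trace_diagonal]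
      simp
    rw [htr] at ht
    exact_mod_cast ht
  · intro k
    have h1 : (star (hH.eigenvectorUnitary : Matrix (Fin d) (Fin d) ℂ)
        * (hH.eigenvectorUnitary : Matrix (Fin d) (Fin d) ℂ)) k k = 1 := by
      rw [hU]; simp
    rw [Matrix.mul_apply] at h1
    have h2 : ∀ a, (star (hH.eigenvectorUnitary : Matrix (Fin d) (Fin d) ℂ)) k a
        * (hH.eigenvectorUnitary : Matrix (Fin d) (Fin d) ℂ) a k
        = (Complex.normSq ((hH.eigenvectorUnitary : Matrix (Fin d) (Fin d) ℂ) a k) : ℂ) := by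
      intro a
      rw [Matrix.star_apply, RCLike.star_def, ← Complex.normSq_eq_conj_mul_self]
    rw [Finset.sum_congr rfl fun a _ => h2 a, ← Complex.ofReal_sum] at h1
    exact_mod_cast h1
  · apply Matrix.ext
    intro a b
    conv_lhs => rw [hH.spectral_theorem, Unitary.conjStarAlgAut_apply]
    simp only [Matrix.mul_apply, Matrix.diagonal_apply, Matrix.star_apply, Matrix.sum_apply,
      Matrix.smul_apply, Matrix.of_apply, RCLike.star_def, Function.comp_apply,
      Finset.mem_univ, if_true, Complex.real_smul, mul_ite, mul_zero, Finset.sum_ite_eq',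
      Finset.sum_ite_eq]
    exact Finset.sum_congr rfl fun k _ => (mul_assoc _ _ _).trans (mul_left_comm _ _ _)

/-- A finite family of quantum channels is symmetrizable if and only if
every finite collection of pure states can be symmetrized. -/
theorem symmetrizable_iff_pure_state_symmetrizable
    {S : Type} [Fintype S] (d d' : ℕ)
    (N : S → (Matrix (Fin d) (Fin d) ℂ →ₗ[ℂ] Matrix (Fin d') (Fin d') ℂ))
    (hchan : ∀ s, IsQuantumChannel (N s)) :
    Symmetrizable N ↔
      ∀ (K : ℕ) (ψ : Fin K → Matrix (Fin d) (Fin d) ℂ),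
        (∀ i, IsPureState (ψ i)) →
        ∃ p : Fin K → S → ℝ,
          (∀ i, IsProbDist (p i)) ∧
          (∀ i j, ∑ s : S, p i s • N s (ψ j) = ∑ s : S, p j s • N s (ψ i)) := by
  constructor
  · intro hsym K ψ hψ
    exact hsym K ψ fun i => pure_isDensity (hψ i)
  · intro hpure K ρ hρ
    choose lam vv hlam0 hlam1 hunit hdecomp using fun i => density_decomp (hρ i).1 (hρ i).2
    set e : Fin K × Fin d ≃ Fin (K * d) := finProdFinEquiv with he
    set Ψ : Fin (K * d) → Matrix (Fin d) (Fin d) ℂ := fun t =>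
      Matrix.of fun a b => vv (e.symm t).1 (e.symm t).2 a
        * (starRingEnd ℂ) (vv (e.symm t).1 (e.symm t).2 b) with hΨ
    obtain ⟨p', hp'd, hp's⟩ := hpure (K * d) Ψ
      (fun t => ⟨vv (e.symm t).1 (e.symm t).2, hunit _ _, rfl⟩)
    set P : Fin K → S → ℝ := fun i s => ∑ k, lam i k * p' (e (i, k)) s with hP
    have hΨe : ∀ (i : Fin K) (k : Fin d), Ψ (e (i, k))
        = Matrix.of fun a b => vv i k a * (starRingEnd ℂ) (vv i k b) := by
      intro i k
      simp [hΨ]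
    have hρd : ∀ j, ρ j = ∑ l, lam j l • Ψ (e (j, l)) := by
      intro j
      rw [hdecomp j]
      exact Finset.sum_congr rfl fun l _ => by rw [hΨe]
    have key : ∀ i j : Fin K, ∑ s : S, P i s • N s (ρ j)
        = ∑ k : Fin d, ∑ l : Fin d, (lam i k * lam j l) •
            ∑ s : S, p' (e (i, k)) s • N s (Ψ (e (j, l))) := by
      intro i j
      have hN : ∀ s, N s (ρ j) = ∑ l, lam j l • N s (Ψ (e (j, l))) := by
        intro s
        rw [hρd j, map_sum]
        exact Finset.sum_congr rfl fun l _ => LinearMap.map_smul_of_tower (N s) _ _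
      calc ∑ s : S, P i s • N s (ρ j)
          = ∑ s : S, ∑ k, ∑ l,
              (lam i k * p' (e (i, k)) s) • (lam j l • N s (Ψ (e (j, l)))) := by
            refine Finset.sum_congr rfl fun s _ => ?_
            rw [hN s, hP]
            simp only [Finset.sum_smul, Finset.smul_sum]
            rw [Finset.sum_comm]
        _ = ∑ k, ∑ l, (lam i k * lam j l) •
              ∑ s : S, p' (e (i, k)) s • N s (Ψ (e (j, l))) := by
            rw [Finset.sum_comm]
            refine Finset.sum_congr rfl fun k _ => ?_
            rw [Finset.sum_comm]
            refine Finset.sum_congr rfl fun l _ => ?_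
            rw [Finset.smul_sum]
            refine Finset.sum_congr rfl fun s _ => ?_
            rw [mul_smul, mul_smul, smul_comm (p' (e (i, k)) s) (lam j l)]
    refine ⟨P, ?_, ?_⟩
    · intro i
      constructor
      · intro s
        exact Finset.sum_nonneg fun k _ => mul_nonneg (hlam0 i k) ((hp'd _).1 s)
      · rw [Finset.sum_comm]
        calc ∑ k, ∑ s, lam i k * p' (e (i, k)) s
            = ∑ k : Fin d, lam i k * ∑ s, p' (e (i, k)) s := by
              exact Finset.sum_congr rfl fun k _ => (Finset.mul_sum _ _ _).symm
          _ = 1 := by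
              simp only [(hp'd _).2, mul_one]
              exact hlam1 i
    · intro i j
      rw [key i j, key j i, Finset.sum_comm]
      refine Finset.sum_congr rfl fun l _ => Finset.sum_congr rfl fun k _ => ?_
      rw [hp's (e (i, k)) (e (j, l)), mul_comm]
end

section
/- Let K ∈ ℕ, K ≥ 1, let δ ≥ 0 and ε ∈ ℝ, and let X_1,…,X_K be independent, identically distributed random variables on a probability space (Ω, 𝒜, ℙ), each taking values in [0,1] almost surely and satisfying 𝔼[X_1] ≥ 1−δ. Then ℙ(1 − (1/K) Σ_{j=1}^K X_j ≥ ε) ≤ 2^{−K(ε−2δ)}. -/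
open MeasureTheory ProbabilityTheory Real

lemma exp_mul_log_two_le {y : ℝ} (h0 : 0 ≤ y) (h1 : y ≤ 1) :
    Real.exp (Real.log 2 * y) ≤ 1 + y := by
  have h := convexOn_exp.2 (Set.mem_univ (0 : ℝ)) (Set.mem_univ (Real.log 2))
    (show (0:ℝ) ≤ 1 - y by linarith) h0 (show (1 - y) + y = 1 by ring)
  simp only [smul_eq_mul, mul_zero, zero_add, Real.exp_zero] at h
  rw [Real.exp_log two_pos] at h
  calc Real.exp (Real.log 2 * y) = Real.exp (y * Real.log 2) := by ring_nf
    _ ≤ (1 - y) * 1 + y * 2 := h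
    _ = 1 + y := by ring

/-- Let `X 1, …, X K` be i.i.d. random variables with values in `[0,1]`
almost surely and expectation at least `1 − δ` (with `δ ≥ 0`). Then
`ℙ(1 − (1/K) Σ_j X_j ≥ ε) ≤ 2^{−K(ε − 2δ)}`. -/
theorem iid_average_large_deviation_bound
    {Ω : Type*} [MeasurableSpace Ω] (P : Measure Ω) [IsProbabilityMeasure P]
    (K : ℕ) (hK : 0 < K) (δ ε : ℝ) (hδ : 0 ≤ δ)
    (X : Fin K → Ω → ℝ) (hmeas : ∀ j, Measurable (X j))
    (hindep : iIndepFun X P)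
    (hident : ∀ j, IdentDistrib (X j) (X ⟨0, hK⟩) P P)
    (hrange : ∀ j, ∀ᵐ ω ∂P, X j ω ∈ Set.Icc (0 : ℝ) 1)
    (hmean : 1 - δ ≤ ∫ ω, X ⟨0, hK⟩ ω ∂P) :
    P {ω | ε ≤ 1 - (1 / (K : ℝ)) * ∑ j, X j ω} ≤
      ENNReal.ofReal ((2 : ℝ) ^ (-(K : ℝ) * (ε - 2 * δ))) := by
  set Y : Fin K → Ω → ℝ := fun j ω => 1 - X j ω with hY
  have hYmeas : ∀ j, Measurable (Y j) := fun j => (measurable_const.sub (hmeas j))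
  have hYindep : iIndepFun Y P :=
    hindep.comp (fun _ x => 1 - x) (fun _ => measurable_const.sub measurable_id)
  have hYrange : ∀ j, ∀ᵐ ω ∂P, Y j ω ∈ Set.Icc (0 : ℝ) 1 := by
    intro j
    filter_upwards [hrange j] with ω hω
    obtain ⟨h1, h2⟩ := hω
    simp only [hY, Set.mem_Icc]
    constructor <;> linarith
  have hKpos : (0 : ℝ) < K := Nat.cast_pos.mpr hK
  -- rewrite the event
  have hset : {ω | ε ≤ 1 - (1 / (K : ℝ)) * ∑ j, X j ω}
      = {ω | (K : ℝ) * ε ≤ (∑ j, Y j) ω} := by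
    ext ω
    simp only [Set.mem_setOf_eq, Finset.sum_apply, hY]
    rw [Finset.sum_sub_distrib, Finset.sum_const, Finset.card_univ, Fintype.card_fin,
      nsmul_eq_mul, mul_one,
      show (1:ℝ) - 1 / (K:ℝ) * ∑ j, X j ω = ((K:ℝ) - ∑ j, X j ω) / K by field_simp,
      le_div_iff₀ hKpos, mul_comm]
  rw [hset]
  -- integrability of exp(log 2 * Y j)
  have hint : ∀ j, Integrable (fun ω => Real.exp (Real.log 2 * Y j ω)) P := by
    intro j
    refine (integrable_const (2 : ℝ)).mono'
      (((hYmeas j).const_mul _).exp.aestronglyMeasurable) ?_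
    filter_upwards [hYrange j] with ω hω
    rw [Real.norm_eq_abs, abs_of_pos (Real.exp_pos _)]
    calc Real.exp (Real.log 2 * Y j ω) ≤ 1 + Y j ω := exp_mul_log_two_le hω.1 hω.2
      _ ≤ 2 := by linarith [hω.2]
  have hintsum : Integrable (fun ω => Real.exp (Real.log 2 * (∑ j, Y j) ω)) P := by
    simp only [Finset.sum_apply]
    have hm : Measurable (fun ω => ∑ j, Y j ω) :=
      Finset.measurable_sum Finset.univ (fun j _ => hYmeas j)
    refine (integrable_const ((2 : ℝ) ^ K)).mono'
      ((hm.const_mul _).exp.aestronglyMeasurable) ?_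
    have : ∀ᵐ ω ∂P, ∀ j, Y j ω ∈ Set.Icc (0 : ℝ) 1 := ae_all_iff.mpr hYrange
    filter_upwards [this] with ω hω
    rw [Real.norm_eq_abs, abs_of_pos (Real.exp_pos _)]
    have h1 : (∑ j, Y j ω) ≤ K := by
      calc (∑ j, Y j ω) ≤ ∑ _j : Fin K, (1 : ℝ) :=
            Finset.sum_le_sum fun j _ => (hω j).2
        _ = K := by simp
    calc Real.exp (Real.log 2 * ∑ j, Y j ω)
        ≤ Real.exp (Real.log 2 * K) := by
          have := Real.log_nonneg (by norm_num : (1:ℝ) ≤ 2)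
          exact Real.exp_le_exp.mpr (by nlinarith)
      _ = (2 : ℝ) ^ K := by
          rw [mul_comm, Real.exp_nat_mul, Real.exp_log two_pos]
  -- Chernoff bound
  have hchernoff := measure_ge_le_exp_mul_mgf (X := ∑ j, Y j) (μ := P) ((K : ℝ) * ε)
    (Real.log_nonneg (by norm_num)) hintsum
  -- mgf Y j ≤ 1 + δ
  have hXint : ∀ j, Integrable (X j) P := by
    intro j
    refine (integrable_const (1 : ℝ)).mono' (hmeas j).aestronglyMeasurable ?_
    filter_upwards [hrange j] with ω hω
    rw [Real.norm_eq_abs, abs_of_nonneg hω.1]; exact hω.2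
  have hEX : ∀ j, 1 - δ ≤ ∫ ω, X j ω ∂P := fun j => by
    rw [(hident j).integral_eq]; exact hmean
  have hmgf : ∀ j, mgf (Y j) P (Real.log 2) ≤ 1 + δ := by
    intro j
    have h1 : mgf (Y j) P (Real.log 2) ≤ ∫ ω, (1 + Y j ω) ∂P := by
      refine integral_mono_ae (hint j) ((integrable_const (1:ℝ)).add
        ((integrable_const (1:ℝ)).sub (hXint j))) ?_
      filter_upwards [hYrange j] with ω hω
      exact exp_mul_log_two_le hω.1 hω.2
    have h2 : ∫ ω, (1 + Y j ω) ∂P = 2 - ∫ ω, X j ω ∂P := by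
      have heq : (fun ω => 1 + Y j ω) = fun ω => 2 - X j ω := by
        funext ω; simp only [hY]; ring
      rw [heq, integral_sub (integrable_const _) (hXint j), integral_const]
      simp
    rw [h2] at h1
    linarith [hEX j]
  have hmgfsum : mgf (∑ j, Y j) P (Real.log 2) ≤ (1 + δ) ^ K := by
    rw [hYindep.mgf_sum hYmeas]
    calc ∏ j, mgf (Y j) P (Real.log 2) ≤ ∏ _j : Fin K, (1 + δ) :=
          Finset.prod_le_prod (fun j _ => mgf_nonneg) (fun j _ => hmgf j)
      _ = (1 + δ) ^ K := by simp
  -- combine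
  have hlog2 : (0.6931471803 : ℝ) < Real.log 2 := Real.log_two_gt_d9
  have hbase : (1 + δ : ℝ) ≤ Real.exp (2 * δ * Real.log 2) := by
    calc (1 + δ : ℝ) ≤ 1 + 2 * δ * Real.log 2 := by nlinarith
      _ ≤ Real.exp (2 * δ * Real.log 2) := by
          have := Real.add_one_le_exp (2 * δ * Real.log 2); linarith
  have hfinal : Real.exp (-Real.log 2 * ((K : ℝ) * ε)) * mgf (∑ j, Y j) P (Real.log 2)
      ≤ (2 : ℝ) ^ (-(K : ℝ) * (ε - 2 * δ)) := by
    have h1 : (1 + δ : ℝ) ^ K ≤ Real.exp (2 * δ * Real.log 2) ^ K :=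
      pow_le_pow_left₀ (by linarith) hbase K
    have h2 : mgf (∑ j, Y j) P (Real.log 2) ≤ Real.exp ((K : ℝ) * (2 * δ * Real.log 2)) := by
      rw [Real.exp_nat_mul]; exact hmgfsum.trans h1
    calc Real.exp (-Real.log 2 * ((K : ℝ) * ε)) * mgf (∑ j, Y j) P (Real.log 2)
        ≤ Real.exp (-Real.log 2 * ((K : ℝ) * ε)) * Real.exp ((K : ℝ) * (2 * δ * Real.log 2)) :=
          mul_le_mul_of_nonneg_left h2 (Real.exp_pos _).le
      _ = Real.exp ((-(K : ℝ) * (ε - 2 * δ)) * Real.log 2) := by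
          rw [← Real.exp_add]; congr 1; ring
      _ = (2 : ℝ) ^ (-(K : ℝ) * (ε - 2 * δ)) := by
          rw [Real.rpow_def_of_pos two_pos, mul_comm]
  have := hchernoff.trans hfinal
  calc P {ω | (K : ℝ) * ε ≤ (∑ j, Y j) ω}
      = ENNReal.ofReal (P {ω | (K : ℝ) * ε ≤ (∑ j, Y j) ω}).toReal :=
        (ENNReal.ofReal_toReal (measure_ne_top _ _)).symm
    _ ≤ ENNReal.ofReal ((2 : ℝ) ^ (-(K : ℝ) * (ε - 2 * δ))) := ENNReal.ofReal_le_ofReal this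
end

section
/- Let (Ω, 𝒜, μ) be a probability space, J a finite nonempty set, and for each j ∈ J let g_j : Ω → ℝ be a measurable function with 0 ≤ g_j(ω) ≤ 1 for all ω ∈ Ω and ∫ g_j dμ ≥ 1−δ, where δ ≥ 0. Let ε > 2δ and K ∈ ℕ, K ≥ 1, satisfy |J| · 2^{−K(ε−2δ)} < 1. Then there exist ω_1,…,ω_K ∈ Ω such that (1/K) Σ_{k=1}^K g_j(ω_k) ≥ 1−ε for every j ∈ J. -/
open MeasureTheory

lemma measurable_two_rpow {α : Type*} [MeasurableSpace α] {h : α → ℝ}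
    (hm : Measurable h) : Measurable fun a => (2:ℝ) ^ h a := by
  have he : (fun a => (2:ℝ) ^ h a) = fun a => Real.exp (Real.log 2 * h a) := by
    funext a; rw [Real.rpow_def_of_pos (by norm_num)]
  rw [he]; exact (measurable_const.mul hm).exp

/-- `2^x ≤ 1 + x` for `x ∈ [0,1]`. -/
lemma rpow_two_le_one_add {x : ℝ} (h0 : 0 ≤ x) (h1 : x ≤ 1) :
    (2 : ℝ) ^ x ≤ 1 + x := by
  have hx : (2 : ℝ) ^ x = Real.exp ((1 - x) • (0 : ℝ) + x • Real.log 2) := by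
    rw [Real.rpow_def_of_pos (by norm_num)]
    congr 1
    simp [smul_eq_mul]; ring
  rw [hx]
  have h2 := convexOn_exp.2 (Set.mem_univ (0 : ℝ)) (Set.mem_univ (Real.log 2))
    (by linarith : (0:ℝ) ≤ 1 - x) h0 (by ring)
  calc Real.exp ((1 - x) • (0 : ℝ) + x • Real.log 2)
      ≤ (1 - x) • Real.exp 0 + x • Real.exp (Real.log 2) := h2
    _ = 1 + x := by
        rw [Real.exp_zero, Real.exp_log (by norm_num : (0:ℝ) < 2)]
        simp [smul_eq_mul]; ring

/-- `1 + δ ≤ 2^(2δ)` for `δ ≥ 0`. -/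
lemma one_add_le_rpow {δ : ℝ} (hδ : 0 ≤ δ) : 1 + δ ≤ (2 : ℝ) ^ (2 * δ) := by
  have hlog : (1:ℝ)/2 ≤ Real.log 2 := by
    have := Real.log_two_gt_d9; linarith
  have h1 : δ + 1 ≤ Real.exp (2 * δ * Real.log 2) := by
    calc δ + 1 ≤ 2 * δ * Real.log 2 + 1 := by nlinarith
      _ ≤ Real.exp (2 * δ * Real.log 2) := Real.add_one_le_exp _
  rw [Real.rpow_def_of_pos (by norm_num)]
  rw [mul_comm (Real.log 2)]; linarith

/-- **core of the Random Code Reduction.** Let `(Ω, 𝒜, μ)` be a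
probability space, `J` a finite nonempty index set, and `g j : Ω → ℝ` measurable
functions with values in `[0,1]` and `∫ g j dμ ≥ 1 − δ`. If `ε > 2δ` and `K ≥ 1`
satisfy `|J| · 2^{−K(ε−2δ)} < 1`, then there exist points `ω 1, …, ω K ∈ Ω` such that
`(1/K) Σ_k g j (ω k) ≥ 1 − ε` for every `j ∈ J`. -/
theorem random_code_reduction_core
    {Ω : Type*} [MeasurableSpace Ω] (μ : Measure Ω) [IsProbabilityMeasure μ]
    {J : Type*} [Fintype J] [Nonempty J]
    (g : J → Ω → ℝ) (δ ε : ℝ) (hδ : 0 ≤ δ)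
    (hmeas : ∀ j, Measurable (g j))
    (hbound : ∀ j ω, g j ω ∈ Set.Icc (0 : ℝ) 1)
    (hint : ∀ j, 1 - δ ≤ ∫ ω, g j ω ∂μ)
    (hε : 2 * δ < ε)
    (K : ℕ) (hK : 1 ≤ K)
    (hcard : (Fintype.card J : ℝ) * (2 : ℝ) ^ (-(K : ℝ) * (ε - 2 * δ)) < 1) :
    ∃ ω : Fin K → Ω, ∀ j, 1 - ε ≤ (1 / (K : ℝ)) * ∑ k, g j (ω k) := by
  letI : MeasureSpace Ω := ⟨μ⟩
  have hμ : μ = (volume : Measure Ω) := rfl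
  set ν : Measure (Fin K → Ω) := (volume : Measure (Fin K → Ω)) with hν
  haveI : IsProbabilityMeasure ν := by
    rw [hν]; infer_instance
  -- the bad sets
  set A : J → Set (Fin K → Ω) := fun j => {ω | (1 / (K : ℝ)) * ∑ k, g j (ω k) < 1 - ε}
    with hA
  -- f j ω = 2^(1 - g j ω)
  set f : J → Ω → ℝ := fun j ω => (2 : ℝ) ^ (1 - g j ω) with hf
  have hKpos : (0:ℝ) < K := by exact_mod_cast hK
  -- integral bound for f j
  have hf_int_le : ∀ j, ∫ ω, f j ω ∂μ ≤ (2:ℝ) ^ (2 * δ) := by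
    intro j
    have hfm : Measurable (f j) := measurable_two_rpow (measurable_const.sub (hmeas j))
    have hint1 : Integrable (f j) μ := by
      refine ⟨hfm.aestronglyMeasurable, HasFiniteIntegral.of_bounded (C := 2) ?_⟩
      · filter_upwards with ω
        have hb := hbound j ω
        have h1 : (0:ℝ) ≤ 1 - g j ω := by simpa using hb.2
        have h2 : 1 - g j ω ≤ 1 := by have := hb.1; linarith
        have hpos : (0:ℝ) ≤ f j ω := (Real.rpow_pos_of_pos (by norm_num) _).le
        rw [Real.norm_of_nonneg hpos]
        calc f j ω ≤ (2:ℝ)^(1:ℝ) := Real.rpow_le_rpow_of_exponent_le (by norm_num) h2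
          _ = 2 := Real.rpow_one 2
    have step1 : ∫ ω, f j ω ∂μ ≤ ∫ ω, (1 + (1 - g j ω)) ∂μ := by
      refine integral_mono hint1 ?_ ?_
      · exact (integrable_const (1:ℝ)).add ((integrable_const (1:ℝ)).sub
          (⟨(hmeas j).aestronglyMeasurable, HasFiniteIntegral.of_bounded (C := 1)
            (by filter_upwards with ω; have := hbound j ω
                rw [Real.norm_of_nonneg this.1]; exact this.2)⟩))
      · intro ω
        have hb := hbound j ω
        exact rpow_two_le_one_add (by linarith [hb.2]) (by linarith [hb.1])
    have step2 : ∫ ω, (1 + (1 - g j ω)) ∂μ ≤ 1 + δ := by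
      have hgint : Integrable (g j) μ :=
        ⟨(hmeas j).aestronglyMeasurable, HasFiniteIntegral.of_bounded (C := 1)
          (by filter_upwards with ω; have := hbound j ω
              rw [Real.norm_of_nonneg this.1]; exact this.2)⟩
      have hcong : ∫ ω, (1 + (1 - g j ω)) ∂μ = ∫ ω, ((2:ℝ) - g j ω) ∂μ :=
        integral_congr_ae (Filter.Eventually.of_forall fun ω => by ring)
      rw [hcong, integral_sub (integrable_const 2) hgint]
      simp only [integral_const, measure_univ, probReal_univ, ENNReal.toReal_one, smul_eq_mul, one_mul]
      have := hint j
      linarith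
    calc ∫ ω, f j ω ∂μ ≤ 1 + δ := step1.trans step2
      _ ≤ (2:ℝ)^(2*δ) := one_add_le_rpow hδ
  -- measure bound for each bad set via Markov
  have hmeasA : ∀ j, (ν (A j)).toReal ≤ (2:ℝ) ^ (-(K:ℝ) * (ε - 2*δ)) := by
    intro j
    set F : (Fin K → Ω) → ℝ := fun ω => ∏ k, f j (ω k) with hF
    have hFm : Measurable F := by
      apply Finset.measurable_prod
      intro k _
      exact (measurable_two_rpow (measurable_const.sub (hmeas j))).comp
        (measurable_pi_apply k)
    have hFnn : ∀ ω, 0 ≤ F ω := fun ω =>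
      Finset.prod_nonneg fun k _ => (Real.rpow_pos_of_pos (by norm_num) _).le
    have hFbd : ∀ ω, ‖F ω‖ ≤ 2 ^ K := by
      intro ω
      rw [Real.norm_of_nonneg (hFnn ω)]
      calc F ω ≤ ∏ _k : Fin K, (2:ℝ) := by
            apply Finset.prod_le_prod (fun k _ => (Real.rpow_pos_of_pos (by norm_num) _).le)
            intro k _
            have hb := hbound j (ω k)
            calc f j (ω k) ≤ (2:ℝ)^(1:ℝ) :=
                  Real.rpow_le_rpow_of_exponent_le (by norm_num) (by linarith [hb.1])
              _ = 2 := Real.rpow_one 2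
        _ = 2 ^ K := by simp
    have hFint : Integrable F ν :=
      ⟨hFm.aestronglyMeasurable, HasFiniteIntegral.of_bounded (C := 2 ^ K)
        (Filter.Eventually.of_forall hFbd)⟩
    -- F ≥ 2^(Kε) on A j
    have hsub : A j ⊆ {ω | (2:ℝ)^((K:ℝ)*ε) ≤ F ω} := by
      intro ω hω
      have hω' : (1 / (K : ℝ)) * ∑ k, g j (ω k) < 1 - ε := hω
      have hsum : ∑ k, g j (ω k) < (K:ℝ) * (1 - ε) := by
        rw [div_mul_eq_mul_div, one_mul, div_lt_iff₀ hKpos] at hω'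
        linarith [hω']
      have hFeq : F ω = (2:ℝ) ^ (∑ k, (1 - g j (ω k))) := by
        rw [hF, Real.rpow_sum_of_pos (by norm_num : (0:ℝ) < 2) _ Finset.univ]
      have hsum' : (K:ℝ) * ε ≤ ∑ k, (1 - g j (ω k)) := by
        rw [Finset.sum_sub_distrib, Finset.sum_const]
        simp only [Finset.card_univ, Fintype.card_fin, nsmul_eq_mul, mul_one]
        linarith
      show (2:ℝ)^((K:ℝ)*ε) ≤ F ω
      rw [hFeq]
      exact Real.rpow_le_rpow_of_exponent_le (by norm_num) hsum'
    have markov := mul_meas_ge_le_integral_of_nonneg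
      (Filter.Eventually.of_forall hFnn) hFint ((2:ℝ)^((K:ℝ)*ε))
    have hint_prod : ∫ ω, F ω ∂ν = (∫ ω, f j ω ∂μ) ^ K := by
      rw [hν, hF, hμ]
      have := MeasureTheory.integral_fintype_prod_volume_eq_pow (ι := Fin K) (f j)
      simpa using this
    -- chain the bounds
    have hchain : (2:ℝ)^((K:ℝ)*ε) * (ν (A j)).toReal ≤ (2:ℝ)^((2*δ)*(K:ℝ)) := by
      have h1 : (ν (A j)).toReal ≤ (ν {ω | (2:ℝ)^((K:ℝ)*ε) ≤ F ω}).toReal :=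
        ENNReal.toReal_mono (measure_ne_top ν _) (measure_mono hsub)
      have h2 : (2:ℝ)^((K:ℝ)*ε) * (ν (A j)).toReal
          ≤ (2:ℝ)^((K:ℝ)*ε) * (ν {ω | (2:ℝ)^((K:ℝ)*ε) ≤ F ω}).toReal :=
        mul_le_mul_of_nonneg_left h1 (Real.rpow_pos_of_pos (by norm_num) _).le
      have h3 : (∫ ω, f j ω ∂μ) ^ K ≤ ((2:ℝ)^(2*δ)) ^ K := by
        apply pow_le_pow_left₀ (integral_nonneg fun ω =>
          (Real.rpow_pos_of_pos (by norm_num) _).le) (hf_int_le j)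
      have h4 : ((2:ℝ)^(2*δ)) ^ K = (2:ℝ)^((2*δ)*(K:ℝ)) := by
        rw [← Real.rpow_natCast ((2:ℝ)^(2*δ)) K, ← Real.rpow_mul (by norm_num)]
      calc (2:ℝ)^((K:ℝ)*ε) * (ν (A j)).toReal
          ≤ (2:ℝ)^((K:ℝ)*ε) * (ν {ω | (2:ℝ)^((K:ℝ)*ε) ≤ F ω}).toReal := h2
        _ ≤ ∫ ω, F ω ∂ν := markov
        _ = (∫ ω, f j ω ∂μ) ^ K := hint_prod
        _ ≤ ((2:ℝ)^(2*δ)) ^ K := h3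
        _ = (2:ℝ)^((2*δ)*(K:ℝ)) := h4
    have hpow : (0:ℝ) < (2:ℝ)^((K:ℝ)*ε) := Real.rpow_pos_of_pos (by norm_num) _
    rw [← le_div_iff₀' hpow] at hchain
    calc (ν (A j)).toReal ≤ (2:ℝ)^((2*δ)*(K:ℝ)) / (2:ℝ)^((K:ℝ)*ε) := hchain
      _ = (2:ℝ) ^ (-(K:ℝ) * (ε - 2*δ)) := by
          rw [← Real.rpow_sub (by norm_num)]
          ring_nf
  -- union bound and conclusion
  have hunion : (ν (⋃ j, A j)).toReal < 1 := by
    have h1 : ν (⋃ j, A j) ≤ ∑ j, ν (A j) := measure_iUnion_fintype_le ν A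
    have h2 : (ν (⋃ j, A j)).toReal ≤ ∑ j, (ν (A j)).toReal := by
      calc (ν (⋃ j, A j)).toReal ≤ (∑ j, ν (A j)).toReal :=
            ENNReal.toReal_mono (by simp [measure_ne_top]) h1
        _ = ∑ j, (ν (A j)).toReal := by
            rw [ENNReal.toReal_sum (fun j _ => measure_ne_top ν _)]
    have h3 : ∑ j, (ν (A j)).toReal ≤ (Fintype.card J : ℝ) * (2:ℝ)^(-(K:ℝ)*(ε-2*δ)) := by
      calc ∑ j, (ν (A j)).toReal ≤ ∑ _j : J, (2:ℝ)^(-(K:ℝ)*(ε-2*δ)) :=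
            Finset.sum_le_sum fun j _ => hmeasA j
        _ = (Fintype.card J : ℝ) * (2:ℝ)^(-(K:ℝ)*(ε-2*δ)) := by
            rw [Finset.sum_const]; simp [mul_comm]
    linarith
  have hne : ((⋃ j, A j)ᶜ : Set (Fin K → Ω)).Nonempty := by
    by_contra hemp
    rw [Set.not_nonempty_iff_eq_empty, Set.compl_empty_iff] at hemp
    rw [hemp] at hunion
    simp at hunion
  obtain ⟨ω, hω⟩ := hne
  refine ⟨ω, fun j => ?_⟩
  have : ω ∉ A j := fun h => hω (Set.mem_iUnion.mpr ⟨j, h⟩)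
  simpa [hA, not_lt] using this
end

section
/- Let X and Y be finite nonempty sets and let p ∈ 𝔓(X×Y) satisfy p ≠ p_X ⊗ p_Y, i.e. there exists (x,y) ∈ X×Y with p(x,y) ≠ p_X(x)·p_Y(y). Then there exist functions f : X → {0,1} and g : Y → {0,1} such that the pushforward distribution q ∈ 𝔓({0,1}×{0,1}) of p under (x,y) ↦ (f(x),g(y)) satisfies q ≠ q₁ ⊗ q₂, where q₁ and q₂ are the marginal distributions of q. -/
attribute [local instance] Classical.propDecidable

/-- If the distribution `p` on `X × Y` is not the product of its
marginals, then there are binarizations `f : X → {0,1}` and `g : Y → {0,1}` such that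
the pushforward distribution `q` of `p` under `(x,y) ↦ (f x, g y)` is not the product
of its marginals either. -/
theorem binary_preprocessing_preserves_correlation
    {X Y : Type} [Fintype X] [Fintype Y] [Nonempty X] [Nonempty Y]
    (p : X × Y → ℝ) (hp0 : ∀ xy : X × Y, 0 ≤ p xy)
    (hp1 : ∑ xy : X × Y, p xy = 1)
    (hne : ∃ xy : X × Y, p xy ≠ (∑ y : Y, p (xy.1, y)) * (∑ x : X, p (x, xy.2))) :
    ∃ (f : X → Fin 2) (g : Y → Fin 2) (a b : Fin 2),
      (∑ xy : X × Y, if f xy.1 = a ∧ g xy.2 = b then p xy else 0) ≠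
        (∑ xy : X × Y, if f xy.1 = a then p xy else 0) *
          (∑ xy : X × Y, if g xy.2 = b then p xy else 0) := by
  obtain ⟨⟨x₀, y₀⟩, h⟩ := hne
  refine ⟨fun x => if x = x₀ then 0 else 1, fun y => if y = y₀ then 0 else 1, 0, 0, ?_⟩
  have e1 : (∑ xy : X × Y,
      if (if xy.1 = x₀ then (0 : Fin 2) else 1) = 0 ∧ (if xy.2 = y₀ then (0 : Fin 2) else 1) = 0
      then p xy else 0) = p (x₀, y₀) := by
    have : (∑ xy : X × Y,
        if (if xy.1 = x₀ then (0 : Fin 2) else 1) = 0 ∧ (if xy.2 = y₀ then (0 : Fin 2) else 1) = 0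
        then p xy else 0) = ∑ xy : X × Y, if xy = (x₀, y₀) then p xy else 0 := by
      apply Finset.sum_congr rfl
      intro xy _
      by_cases h1 : xy.1 = x₀ <;> by_cases h2 : xy.2 = y₀ <;>
        simp [h1, h2, Prod.ext_iff]
    rw [this, Finset.sum_ite_eq']
    simp
  have e2 : (∑ xy : X × Y, if (if xy.1 = x₀ then (0 : Fin 2) else 1) = 0 then p xy else 0)
      = ∑ y : Y, p (x₀, y) := by
    rw [Fintype.sum_prod_type]
    have : (∑ x : X, ∑ y : Y, if (if (x, y).1 = x₀ then (0 : Fin 2) else 1) = 0 then p (x, y) else 0)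
        = ∑ x : X, if x = x₀ then ∑ y : Y, p (x, y) else 0 := by
      apply Finset.sum_congr rfl
      intro x _
      by_cases h1 : x = x₀ <;> simp [h1]
    rw [this, Finset.sum_ite_eq']
    simp
  have e3 : (∑ xy : X × Y, if (if xy.2 = y₀ then (0 : Fin 2) else 1) = 0 then p xy else 0)
      = ∑ x : X, p (x, y₀) := by
    rw [Fintype.sum_prod_type_right]
    have : (∑ y : Y, ∑ x : X, if (if (x, y).2 = y₀ then (0 : Fin 2) else 1) = 0 then p (x, y) else 0)
        = ∑ y : Y, if y = y₀ then ∑ x : X, p (x, y) else 0 := by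
      apply Finset.sum_congr rfl
      intro y _
      by_cases h1 : y = y₀ <;> simp [h1]
    rw [this, Finset.sum_ite_eq']
    simp
  intro hcon
  apply h
  simp only at hcon
  rw [e1, e2, e3] at hcon
  simpa using hcon
end

section
/- Let S be a finite nonempty set and for each s ∈ S let N_s be a trace-preserving linear map from d×d to d'×d' complex matrices (for instance a quantum channel). Let ρ_1, ρ_2 be density matrices on ℂ^d, let D_1, D_2 be positive semidefinite d'×d' complex matrices with D_1 + D_2 = 𝟙, and let 0 ≤ ε < 1/4. Suppose that tr(D_i N_s(ρ_i)) ≥ 1−2ε for all s ∈ S and i ∈ {1,2}. Then there exist no p, q ∈ 𝔓(S) such that Σ_{s∈S} p(s) N_s(ρ_1) = Σ_{s∈S} q(s) N_s(ρ_2). -/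
open scoped ComplexOrder

/-- Let `{N_s}_{s∈S}` be a finite nonempty family of trace-preserving
linear maps on matrices, `ρ₁, ρ₂` density matrices, `D₁, D₂` positive semidefinite
matrices with `D₁ + D₂ = 𝟙`, and `0 ≤ ε < 1/4`. If `tr(D_i N_s(ρ_i)) ≥ 1 − 2ε` for all
`s ∈ S` and `i ∈ {1,2}`, then no convex combinations of the family applied to `ρ₁` and
`ρ₂` can coincide: there are no `p, q ∈ 𝔓(S)` with
`Σ_s p(s) N_s(ρ₁) = Σ_s q(s) N_s(ρ₂)`. -/
theorem distinguishable_states_not_symmetrizable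
    {S : Type} [Fintype S] [Nonempty S] (d d' : ℕ)
    (N : S → (Matrix (Fin d) (Fin d) ℂ →ₗ[ℂ] Matrix (Fin d') (Fin d') ℂ))
    (htp : ∀ s, ∀ M : Matrix (Fin d) (Fin d) ℂ, ((N s) M).trace = M.trace)
    (ρ₁ ρ₂ : Matrix (Fin d) (Fin d) ℂ)
    (hρ₁ : IsDensityMatrix ρ₁) (hρ₂ : IsDensityMatrix ρ₂)
    (D₁ D₂ : Matrix (Fin d') (Fin d') ℂ)
    (hD₁ : D₁.PosSemidef) (hD₂ : D₂.PosSemidef) (hD : D₁ + D₂ = 1)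
    (ε : ℝ) (hε0 : 0 ≤ ε) (hε : ε < 1 / 4)
    (h₁ : ∀ s, 1 - 2 * ε ≤ ((D₁ * N s ρ₁).trace).re)
    (h₂ : ∀ s, 1 - 2 * ε ≤ ((D₂ * N s ρ₂).trace).re) :
    ¬ ∃ p q : S → ℝ, IsProbDist p ∧ IsProbDist q ∧
        ∑ s : S, p s • N s ρ₁ = ∑ s : S, q s • N s ρ₂ := by
  rintro ⟨p, q, ⟨hp0, hp1⟩, ⟨hq0, hq1⟩, heq⟩
  set σ : Matrix (Fin d') (Fin d') ℂ := ∑ s : S, q s • N s ρ₂ with hσ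
  have hσtr : σ.trace = 1 := by
    rw [hσ, Matrix.trace_sum]
    have : ∀ s : S, (q s • (N s) ρ₂).trace = q s • (1 : ℂ) := by
      intro s; rw [Matrix.trace_smul, htp, hρ₂.2]
    rw [Finset.sum_congr rfl (fun s _ => this s), ← Finset.sum_smul, hq1, one_smul]
  have key : ∀ (D : Matrix (Fin d') (Fin d') ℂ) (c : S → ℝ)
      (τ : S → Matrix (Fin d') (Fin d') ℂ),
      ((D * ∑ s : S, c s • τ s).trace).re = ∑ s : S, c s * ((D * τ s).trace).re := by
    intro D c τ
    rw [Matrix.mul_sum, Matrix.trace_sum, Complex.re_sum]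
    refine Finset.sum_congr rfl fun s _ => ?_
    simp [Matrix.mul_smul, Matrix.trace_smul, Complex.real_smul, Complex.mul_re]
  have hA : 1 - 2 * ε ≤ ((D₁ * σ).trace).re := by
    rw [← heq, key]
    calc 1 - 2 * ε = ∑ s : S, p s * (1 - 2 * ε) := by
          rw [← Finset.sum_mul, hp1, one_mul]
      _ ≤ ∑ s : S, p s * ((D₁ * (N s) ρ₁).trace).re :=
          Finset.sum_le_sum fun s _ => mul_le_mul_of_nonneg_left (h₁ s) (hp0 s)
  have hB : 1 - 2 * ε ≤ ((D₂ * σ).trace).re := by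
    rw [hσ, key]
    calc 1 - 2 * ε = ∑ s : S, q s * (1 - 2 * ε) := by
          rw [← Finset.sum_mul, hq1, one_mul]
      _ ≤ ∑ s : S, q s * ((D₂ * (N s) ρ₂).trace).re :=
          Finset.sum_le_sum fun s _ => mul_le_mul_of_nonneg_left (h₂ s) (hq0 s)
  have hC : (D₁ * σ).trace + (D₂ * σ).trace = 1 := by
    rw [← Matrix.trace_add, ← Matrix.add_mul, hD, Matrix.one_mul, hσtr]
  have hCre : ((D₁ * σ).trace).re + ((D₂ * σ).trace).re = 1 := by
    have := congrArg Complex.re hC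
    simpa using this
  linarith
end
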